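/- Let (Z_1, …, Z_{n+1}) be i.i.d. random elements of a measurable space E and let δ : E → {0,1} be measurable. Fix a subset S ⊆ {1, …, n} and let E_S be the event {δ(Z_i) = 1 for all i ∈ S, δ(Z_i) = 0 for all i ∈ {1,…,n} \ S, and δ(Z_{n+1}) = 1}. Then for every permutation π of S ∪ {n+1} and every bounded measurable function f : E^{S ∪ {n+1}} → ℝ, E[f((Z_{π(i)})_{i ∈ S ∪ {n+1}}) · 1_{E_S}] = E[f((Z_i)_{i ∈ S ∪ {n+1}}) · 1_{E_S}]; that is, conditionally on E_S, the family (Z_i)_{i ∈ S ∪ {n+1}} is exchangeable. -/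

import Mathlib

open MeasureTheory ProbabilityTheory

/-- **Conditional exchangeability of the non-censored subsample** (the key
structural claim of Section 2 of the paper).  Let `Z 0, …, Z n` be i.i.d. random
elements of a measurable space `γ` (the calibration points are indexed by
`i ≠ Fin.last n` and the test point is `Z (Fin.last n)`), and let `δ : γ → Bool`
be measurable (the non-censoring indicator, `true` standing for `1`).  Fix a set
`S` of calibration indices and let `ES` be the event that exactly the points in
`S` among the calibration points are non-censored and that the test point is
non-censored.  Then for every permutation `π` of `S ∪ {last}` (extended by the
identity elsewhere) and every bounded measurable `f`,
`E[f((Z (π i))_{i ∈ S ∪ {last}}) · 1_{ES}] = E[f((Z i)_{i ∈ S ∪ {last}}) · 1_{ES}]`,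
i.e. conditionally on `ES` the family `(Z i)_{i ∈ S ∪ {last}}` is exchangeable. -/
theorem noncensored_conditionally_exchangeable
    {Ω : Type*} [MeasurableSpace Ω] (μ : Measure Ω) [IsProbabilityMeasure μ]
    {γ : Type*} [MeasurableSpace γ]
    (n : ℕ) (Z : Fin (n + 1) → Ω → γ) (hZmeas : ∀ i, Measurable (Z i))
    (hindep : iIndepFun Z μ)
    (hident : ∀ i, IdentDistrib (Z i) (Z 0) μ μ)
    (δ : γ → Bool) (hδ : Measurable δ)
    (S : Finset (Fin (n + 1))) (hS : Fin.last n ∉ S)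
    (ES : Set Ω)
    (hES : ES = {ω | (∀ i ∈ S, δ (Z i ω) = true)
      ∧ (∀ i : Fin (n + 1), i ≠ Fin.last n → i ∉ S → δ (Z i ω) = false)
      ∧ δ (Z (Fin.last n) ω) = true})
    (π : Equiv.Perm (Fin (n + 1)))
    (hπ : ∀ i ∉ insert (Fin.last n) S, π i = i)
    (f : ({i : Fin (n + 1) // i ∈ insert (Fin.last n) S} → γ) → ℝ)
    (hf : Measurable f) (hbdd : ∃ C, ∀ v, |f v| ≤ C) :
    ∫ ω in ES, f (fun i => Z (π i.1) ω) ∂μ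
      = ∫ ω in ES, f (fun i => Z i.1 ω) ∂μ := by
  classical
  -- the law of each coordinate
  set ν : Measure γ := μ.map (Z 0) with hν
  have hνi : ∀ i, μ.map (Z i) = ν := fun i => (hident i).map_eq
  -- the joint random vector
  set Φ : Ω → (Fin (n + 1) → γ) := fun ω i => Z i ω with hΦ
  have hΦmeas : Measurable Φ := measurable_pi_lambda _ fun i => hZmeas i
  -- the joint law is the product measure
  have hmap : μ.map Φ = Measure.pi (fun _ : Fin (n + 1) => ν) := by
    haveI : IsProbabilityMeasure ν := Measure.isProbabilityMeasure_map (hZmeas 0).aemeasurable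
    refine (Measure.pi_eq fun s hs => ?_).symm
    rw [Measure.map_apply hΦmeas (MeasurableSet.univ_pi hs)]
    have hpre : Φ ⁻¹' Set.univ.pi s = ⋂ i ∈ Finset.univ, Z i ⁻¹' s i := by
      ext ω; simp [Φ, Set.mem_pi]
    rw [hpre, hindep.measure_inter_preimage_eq_mul Finset.univ (fun i _ => hs i)]
    refine Finset.prod_congr rfl fun i _ => ?_
    rw [← hνi i, Measure.map_apply (hZmeas i) (hs i)]
  -- the event as a preimage
  set χ : Fin (n + 1) → Bool := fun i => decide (i ∈ insert (Fin.last n) S) with hχ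
  set A : Set (Fin (n + 1) → γ) := Set.univ.pi fun i => δ ⁻¹' {χ i} with hA
  have hAmeas : MeasurableSet A :=
    MeasurableSet.univ_pi fun i => hδ (measurableSet_singleton _)
  have hmemA : ∀ v : Fin (n + 1) → γ, v ∈ A ↔ ∀ i, δ (v i) = χ i := by
    intro v; simp [A, Set.mem_pi]
  have hESA : ES = Φ ⁻¹' A := by
    rw [hES]
    ext ω
    simp only [Set.mem_preimage, hmemA, Set.mem_setOf_eq, χ, Φ]
    constructor
    · rintro ⟨h1, h2, h3⟩ i
      by_cases hi : i ∈ insert (Fin.last n) S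
      · rw [decide_eq_true hi]
        rcases Finset.mem_insert.1 hi with rfl | hi'
        · exact h3
        · exact h1 i hi'
      · rw [decide_eq_false hi]
        simp only [Finset.mem_insert, not_or] at hi
        exact h2 i hi.1 hi.2
    · intro h
      refine ⟨fun i hi => ?_, fun i hi1 hi2 => ?_, ?_⟩
      · have := h i
        simpa [Finset.mem_insert, hi] using this
      · have := h i
        simpa [Finset.mem_insert, hi1, hi2] using this
      · have := h (Fin.last n)
        simpa using this
  have hESmeas : MeasurableSet ES := hESA ▸ hΦmeas hAmeas
  -- π preserves the set `insert last S`, hence χ ∘ π = χ and A is π-invariant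
  have hχπ : ∀ i, χ (π i) = χ i := by
    intro i
    by_cases hi : i ∈ insert (Fin.last n) S
    · have hπi : π i ∈ insert (Fin.last n) S := by
        by_contra hc
        have h1 := hπ (π i) hc
        have h2 : π i = i := π.injective h1
        exact hc (by rwa [h2])
      exact decide_eq_decide.mpr ⟨fun _ => hi, fun _ => hπi⟩
    · rw [hπ i hi]
  have hAπ : ∀ v : Fin (n + 1) → γ, (fun i => v (π i)) ∈ A ↔ v ∈ A := by
    intro v
    rw [hmemA, hmemA]
    constructor
    · intro h j
      have := h (π.symm j)
      rwa [Equiv.apply_symm_apply, ← hχπ (π.symm j), Equiv.apply_symm_apply] at this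
    · intro h i
      rw [← hχπ i]
      exact h (π i)
  -- the restriction map is measurable
  have hres : Measurable fun (v : Fin (n + 1) → γ)
      (i : {i : Fin (n + 1) // i ∈ insert (Fin.last n) S}) => v i.1 :=
    measurable_pi_lambda _ fun i => measurable_pi_apply _
  have hresπ : Measurable fun (v : Fin (n + 1) → γ)
      (i : {i : Fin (n + 1) // i ∈ insert (Fin.last n) S}) => v (π i.1) :=
    measurable_pi_lambda _ fun i => measurable_pi_apply _
  -- indicator functions on the product space
  set G : (Fin (n + 1) → γ) → ℝ :=
    A.indicator (fun v => f (fun i => v i.1)) with hG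
  set F : (Fin (n + 1) → γ) → ℝ :=
    A.indicator (fun v => f (fun i => v (π i.1))) with hF
  have hGmeas : Measurable G := (hf.comp hres).indicator hAmeas
  have hFmeas : Measurable F := (hf.comp hresπ).indicator hAmeas
  -- F = G ∘ (· ∘ π)
  have hFG : ∀ v, F v = G (fun i => v (π i)) := by
    intro v
    by_cases hv : v ∈ A
    · rw [hF, hG, Set.indicator_of_mem hv, Set.indicator_of_mem ((hAπ v).2 hv)]
    · rw [hF, hG, Set.indicator_of_notMem hv,
        Set.indicator_of_notMem (fun hc => hv ((hAπ v).1 hc))]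
  -- rewrite both sides as integrals over the product measure
  have hlhs : ∫ ω in ES, f (fun i => Z (π i.1) ω) ∂μ
      = ∫ v, F v ∂(Measure.pi fun _ : Fin (n + 1) => ν) := by
    rw [← hmap, integral_map hΦmeas.aemeasurable hFmeas.aestronglyMeasurable,
      ← integral_indicator hESmeas]
    congr 1
    ext ω
    by_cases hω : ω ∈ ES
    · rw [Set.indicator_of_mem hω, hF,
        Set.indicator_of_mem (by rwa [hESA, Set.mem_preimage] at hω)]
    · rw [Set.indicator_of_notMem hω, hF,
        Set.indicator_of_notMem (by rwa [hESA, Set.mem_preimage] at hω)]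
  have hrhs : ∫ ω in ES, f (fun i => Z i.1 ω) ∂μ
      = ∫ v, G v ∂(Measure.pi fun _ : Fin (n + 1) => ν) := by
    rw [← hmap, integral_map hΦmeas.aemeasurable hGmeas.aestronglyMeasurable,
      ← integral_indicator hESmeas]
    congr 1
    ext ω
    by_cases hω : ω ∈ ES
    · rw [Set.indicator_of_mem hω, hG,
        Set.indicator_of_mem (by rwa [hESA, Set.mem_preimage] at hω)]
    · rw [Set.indicator_of_notMem hω, hG,
        Set.indicator_of_notMem (by rwa [hESA, Set.mem_preimage] at hω)]
  rw [hlhs, hrhs]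
  -- the product measure is invariant under coordinate permutation
  haveI : IsProbabilityMeasure ν := Measure.isProbabilityMeasure_map (hZmeas 0).aemeasurable
  haveI : SigmaFinite ν := inferInstance
  set T := MeasurableEquiv.piCongrLeft (fun _ : Fin (n + 1) => γ) π.symm with hT
  have hTapp : ∀ v : Fin (n + 1) → γ, T v = fun i => v (π i) := by
    intro v
    funext i
    have := Equiv.piCongrLeft_apply_apply (fun _ : Fin (n + 1) => γ) π.symm v (π i)
    simp only [T, MeasurableEquiv.piCongrLeft] at this ⊢
    convert this using 2
    rw [Equiv.symm_apply_apply]; rfl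
  have hMP : MeasurePreserving T (Measure.pi fun _ : Fin (n + 1) => ν)
      (Measure.pi fun _ : Fin (n + 1) => ν) :=
    measurePreserving_piCongrLeft (fun _ : Fin (n + 1) => ν) π.symm
  calc ∫ v, F v ∂(Measure.pi fun _ : Fin (n + 1) => ν)
      = ∫ v, G (T v) ∂(Measure.pi fun _ : Fin (n + 1) => ν) := by
        refine integral_congr_ae (Filter.Eventually.of_forall fun v => ?_)
        show F v = G (T v)
        rw [hFG v, hTapp v]
    _ = ∫ v, G v ∂(Measure.pi fun _ : Fin (n + 1) => ν) :=
        hMP.integral_comp T.measurableEmbedding G
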